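/- arXiv:1609.08098 — 5 statements merged into one kernel-verified Lean document; each statement's English description precedes it below -/
import Mathlib

section
/- Let ν be a positive finite Radon measure on an interval I = (0, l) with ν({x}) = 0 for all x. Then for every n ∈ ℕ and every a > 0 there exists a partition 0 = t_0 < t_1 < ... < t_n = l such that max_k (t_k − t_{k−1})^a ν((t_{k−1}, t_k)) ≤ l^a n^{−1−a} ν(I). -/
open MeasureTheory Set

lemma amgm_aux {a u m c : ℝ} (ha : 0 < a) (hu : 0 ≤ u) (hm : 0 ≤ m)
    (h : a * u + m = (1 + a) * c) : u ^ a * m ≤ c ^ (1 + a) := by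
  have h1a : 0 < 1 + a := by linarith
  have hw : a / (1 + a) + 1 / (1 + a) = 1 := by field_simp; ring
  have h1 := Real.geom_mean_le_arith_mean2_weighted (by positivity) (by positivity) hu hm hw
  have h2 : a / (1 + a) * u + 1 / (1 + a) * m = c := by field_simp; linarith
  rw [h2] at h1
  have h3 := Real.rpow_le_rpow (by positivity) h1 h1a.le
  calc u ^ a * m = (u ^ (a / (1 + a)) * m ^ (1 / (1 + a))) ^ (1 + a) := by
        rw [Real.mul_rpow (by positivity) (by positivity), ← Real.rpow_mul hu,
          ← Real.rpow_mul hm, div_mul_cancel₀ _ h1a.ne', div_mul_cancel₀ _ h1a.ne',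
          Real.rpow_one]
    _ ≤ c ^ (1 + a) := h3

lemma F_mono (ν : Measure ℝ) [IsFiniteMeasure ν] :
    Monotone fun t => (ν (Ioo 0 t)).toReal := fun _ _ hst =>
  ENNReal.toReal_mono (measure_ne_top ν _) (measure_mono (Ioo_subset_Ioo le_rfl hst))

lemma F_diff (ν : Measure ℝ) [IsFiniteMeasure ν] {s t : ℝ} :
    (ν (Ioo 0 t)).toReal - (ν (Ioo 0 s)).toReal ≤ (ν (Icc s t)).toReal := by
  have h : ν (Ioo 0 t) ≤ ν (Ioo 0 s) + ν (Icc s t) := by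
    refine le_trans (measure_mono ?_) (measure_union_le _ _)
    intro y hy
    rcases lt_or_ge y s with h' | h'
    · exact Or.inl ⟨hy.1, h'⟩
    · exact Or.inr ⟨h', hy.2.le⟩
  have := ENNReal.toReal_mono (by finiteness) h
  rw [ENNReal.toReal_add (measure_ne_top ν _) (measure_ne_top ν _)] at this
  linarith

lemma F_cont (ν : Measure ℝ) [IsFiniteMeasure ν] (hna : ∀ x : ℝ, ν {x} = 0) :
    Continuous fun t => (ν (Ioo 0 t)).toReal := by
  haveI : NullSingletonClass ν := ⟨hna⟩
  rw [continuous_iff_continuousAt]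
  intro x
  rw [Metric.continuousAt_iff]
  intro ε hε
  have h0 : Filter.Tendsto (fun δ => (ν (Icc (x - δ) (x + δ))).toReal) (nhds 0) (nhds 0) := by
    have := tendsto_measure_Icc (μ := ν) x
    have h2 := (ENNReal.tendsto_toReal (by simp)).comp this
    simpa [Function.comp_def] using h2
  have h1 : ∀ᶠ δ in nhds (0 : ℝ), (ν (Icc (x - δ) (x + δ))).toReal < ε :=
    h0.eventually (Filter.Tendsto.eventually_lt_const hε Filter.tendsto_id)
  rw [Metric.eventually_nhds_iff] at h1
  obtain ⟨r, hr, hball⟩ := h1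
  refine ⟨r / 2, by positivity, fun {t} ht => ?_⟩
  have key : (ν (Icc (x - r/2) (x + r/2))).toReal < ε := by
    apply hball; rw [Real.dist_eq]; rw [abs_of_nonneg (by linarith)]; linarith
  rw [Real.dist_eq] at ht ⊢
  have habs : |t - x| < r / 2 := ht
  have h2 : x - r/2 ≤ t := by have := abs_lt.mp habs; linarith [this.1]
  have h3 : t ≤ x + r/2 := by have := abs_lt.mp habs; linarith [this.2]
  rcases le_total t x with h' | h'
  · have hd := F_diff ν (s := t) (t := x)
    have hmono : (ν (Icc t x)).toReal ≤ (ν (Icc (x - r/2) (x + r/2))).toReal :=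
      ENNReal.toReal_mono (measure_ne_top ν _)
        (measure_mono (Icc_subset_Icc h2 (by linarith)))
    have hFm := F_mono ν h'
    rw [abs_of_nonpos (by simpa using hFm)]
    simp only at hd hFm ⊢
    linarith
  · have hd := F_diff ν (s := x) (t := t)
    have hmono : (ν (Icc x t)).toReal ≤ (ν (Icc (x - r/2) (x + r/2))).toReal :=
      ENNReal.toReal_mono (measure_ne_top ν _)
        (measure_mono (Icc_subset_Icc (by linarith) h3))
    have hFm := F_mono ν h'
    rw [abs_of_nonneg (by simpa using hFm)]
    simp only at hd hFm ⊢
    linarith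

/-- Partition lemma: for a finite nonatomic measure `ν` on `I = (0, l)`, every
`n ∈ ℕ` and `a > 0` admit a partition `0 = t_0 < t_1 < … < t_n = l` with
`max_k (t_k − t_{k−1})^a ν((t_{k−1}, t_k)) ≤ l^a n^{−1−a} ν(I)`. -/
theorem exists_partition_theta (ν : Measure ℝ) [IsFiniteMeasure ν]
    (hna : ∀ x : ℝ, ν {x} = 0) (l : ℝ) (hl : 0 < l) (a : ℝ) (ha : 0 < a)
    (n : ℕ) (hn : 0 < n) :
    ∃ t : Fin (n + 1) → ℝ, StrictMono t ∧ t 0 = 0 ∧ t (Fin.last n) = l ∧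
      ∀ k : Fin n, (t k.succ - t k.castSucc) ^ a *
          (ν (Set.Ioo (t k.castSucc) (t k.succ))).toReal ≤
        l ^ a * (n : ℝ) ^ (-1 - a) * (ν (Set.Ioo 0 l)).toReal := by
  have hn' : (0 : ℝ) < n := Nat.cast_pos.mpr hn
  set F : ℝ → ℝ := fun t => (ν (Ioo 0 t)).toReal with hF
  set M : ℝ := F l with hM
  by_cases hM0 : M = 0
  · -- trivial case: no mass
    refine ⟨fun k => (k : ℝ) * (l / n), ?_, by simp, ?_, ?_⟩
    · intro i j hij
      have : ((i : ℕ) : ℝ) < ((j : ℕ) : ℝ) := Nat.cast_lt.mpr hij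
      exact mul_lt_mul_of_pos_right this (by positivity)
    · simp only [Fin.val_last]
      field_simp
    · intro k
      have hsub : Ioo ((k.castSucc : ℕ) * (l / n)) ((k.succ : ℕ) * (l / n)) ⊆ Ioo 0 l := by
        apply Ioo_subset_Ioo
        · positivity
        · have : ((k.succ : ℕ) : ℝ) ≤ n := by
            have := k.succ.isLt; exact_mod_cast Nat.lt_succ_iff.mp this
          calc ((k.succ : ℕ) : ℝ) * (l / n) ≤ n * (l / n) :=
                mul_le_mul_of_nonneg_right this (by positivity)
            _ = l := by field_simp
      have hz : ν (Ioo ((k.castSucc : ℕ) * (l / n)) ((k.succ : ℕ) * (l / n))) = 0 := by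
        have hl0 : ν (Ioo 0 l) = 0 := by
          have : (ν (Ioo 0 l)).toReal = 0 := hM0
          exact (ENNReal.toReal_eq_zero_iff _).mp this |>.resolve_right (measure_ne_top ν _)
        exact measure_mono_null hsub hl0
      rw [hz]
      simp only [ENNReal.toReal_zero, mul_zero]
      have : (ν (Ioo 0 l)).toReal = 0 := hM0
      rw [this, mul_zero]
  · have hMpos : 0 < M := lt_of_le_of_ne ENNReal.toReal_nonneg (Ne.symm hM0)
    set G : ℝ → ℝ := fun t => (a * t / l + F t / M) / (1 + a) with hG
    have h1a : (0 : ℝ) < 1 + a := by linarith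
    have hGcont : Continuous G := by
      apply Continuous.div_const
      exact ((continuous_const.mul continuous_id).div_const l).add
        ((F_cont ν hna).div_const M)
    have hGmono : StrictMono G := by
      intro s t hst
      have hFst : F s ≤ F t := F_mono ν hst.le
      have h1 : a * s / l < a * t / l := by gcongr
      have h2 : F s / M ≤ F t / M := by gcongr
      simp only [hG]
      exact (div_lt_div_iff_of_pos_right h1a).mpr (by linarith)
    have hG0 : G 0 = 0 := by
      simp only [hG, hF]
      simp
    have hGl : G l = 1 := by
      simp only [hG, ← hM]
      field_simp
      ring
    have hex : ∀ k : Fin (n + 1), ∃ x ∈ Icc (0 : ℝ) l, G x = (k : ℝ) / n := by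
      intro k
      have hmem : (k : ℝ) / n ∈ Icc (G 0) (G l) := by
        rw [hG0, hGl]
        constructor
        · positivity
        · rw [div_le_one hn']
          exact_mod_cast Nat.lt_succ_iff.mp k.isLt
      have := intermediate_value_Icc hl.le hGcont.continuousOn hmem
      obtain ⟨x, hx, hfx⟩ := this
      exact ⟨x, hx, hfx⟩
    choose t ht hGt using hex
    have hts : StrictMono t := by
      intro i j hij
      apply hGmono.lt_iff_lt.mp
      rw [hGt, hGt]
      apply div_lt_div_of_pos_right ?_ hn'
      exact_mod_cast hij
    have ht0 : t 0 = 0 := by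
      apply hGmono.injective
      rw [hGt, hG0]
      simp
    have htl : t (Fin.last n) = l := by
      apply hGmono.injective
      rw [hGt, hGl]
      simp only [Fin.val_last]
      field_simp
    refine ⟨t, hts, ht0, htl, ?_⟩
    intro k
    set s := t k.castSucc with hs
    set r := t k.succ with hr
    have hsr : s < r := hts (k.castSucc_lt_succ)
    have hs0 : 0 ≤ s := by
      rw [← ht0]
      exact hts.monotone (Fin.zero_le _)
    set u : ℝ := (r - s) / l with hu_def
    set m : ℝ := (F r - F s) / M with hm_def
    have hu : 0 ≤ u := by
      apply div_nonneg _ hl.le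
      linarith
    have hm : 0 ≤ m := by
      apply div_nonneg _ hMpos.le
      have := F_mono ν hsr.le
      linarith
    have e1 : G r = ((k : ℕ) + 1) / n := by
      have := hGt k.succ
      rw [Fin.val_succ] at this
      push_cast at this
      exact this
    have e2 : G s = (k : ℕ) / n := by
      have := hGt k.castSucc
      rw [Fin.coe_castSucc] at this
      exact this
    have hum : a * u + m = (1 + a) * (1 / n) := by
      have e3 : G r - G s = 1 / n := by
        rw [e1, e2]
        field_simp
        ring
      simp only [hG, hu_def, hm_def] at e3 ⊢
      field_simp at e3 ⊢
      linarith
    have hkey : u ^ a * m ≤ (1 / (n : ℝ)) ^ (1 + a) := amgm_aux ha hu hm hum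
    have hν : (ν (Ioo s r)).toReal ≤ F r - F s := by
      have hdisj : Disjoint (Ioo 0 s) (Ioo s r) := by
        rw [Set.Ioo_disjoint_Ioo]
        simp
      have hmeas : ν (Ioo 0 s) + ν (Ioo s r) = ν (Ioo 0 s ∪ Ioo s r) :=
        (measure_union hdisj measurableSet_Ioo).symm
      have hsub : Ioo 0 s ∪ Ioo s r ⊆ Ioo 0 r :=
        union_subset (Ioo_subset_Ioo_right hsr.le) (Ioo_subset_Ioo_left hs0)
      have hle : ν (Ioo 0 s) + ν (Ioo s r) ≤ ν (Ioo 0 r) := hmeas ▸ measure_mono hsub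
      have := ENNReal.toReal_mono (measure_ne_top ν _) hle
      rw [ENNReal.toReal_add (measure_ne_top ν _) (measure_ne_top ν _)] at this
      simp only [hF]
      linarith
    have hrs_eq : r - s = l * u := by
      rw [hu_def]
      field_simp
    have hFM : F r - F s = M * m := by
      rw [hm_def]
      field_simp
    have hinv : ((1 : ℝ) / n) ^ (1 + a) = (n : ℝ) ^ (-1 - a) := by
      rw [show (-1 - a : ℝ) = -(1 + a) by ring, Real.rpow_neg hn'.le, one_div,
        Real.inv_rpow hn'.le]
    calc (r - s) ^ a * (ν (Ioo s r)).toReal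
        ≤ (r - s) ^ a * (M * m) := by
          apply mul_le_mul_of_nonneg_left _ (Real.rpow_nonneg (by linarith) a)
          rw [← hFM]
          exact hν
      _ = (l ^ a * M) * (u ^ a * m) := by
          rw [hrs_eq, Real.mul_rpow hl.le hu]
          ring
      _ ≤ (l ^ a * M) * ((1 / (n : ℝ)) ^ (1 + a)) := by
          apply mul_le_mul_of_nonneg_left hkey
          positivity
      _ = l ^ a * (n : ℝ) ^ (-1 - a) * (ν (Set.Ioo 0 l)).toReal := by
          rw [hinv]
          simp only [hM, hF]
          ring
end

section
/- Let ν be a nonatomic positive finite Radon measure on I = (0, l). For every n ∈ ℕ there exist points 0 < t_1 < ... < t_n < l such that for all u ∈ W^1_2(I) with u(t_1) = ... = u(t_n) = 0, one has ∫_I |u(t)|² dν(t) ≤ (l/n²) ν(I) ∫_I |u'(t)|² dt. -/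
open MeasureTheory Set intervalIntegral

section Helpers

open Filter Topology

lemma cdf_cont (ν : Measure ℝ) [IsFiniteMeasure ν] (hna : ∀ x : ℝ, ν {x} = 0) :
    Continuous fun x => (ν (Ioc 0 x)).toReal := by
  set F : ℝ → ℝ := fun x => (ν (Ioc 0 x)).toReal with hF
  have mono : Monotone F := fun x y hxy =>
    ENNReal.toReal_mono (measure_ne_top ν _) (measure_mono (Ioc_subset_Ioc_right hxy))
  refine continuous_iff_continuousAt.mpr fun a => ?_
  have seqlt : Tendsto (fun k : ℕ => a - 1 / (k + 1)) atTop (𝓝[<] a) := by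
    apply tendsto_nhdsWithin_of_tendsto_nhds_of_eventually_within
    · have : Tendsto (fun k : ℕ => 1 / ((k : ℝ) + 1)) atTop (𝓝 0) :=
        tendsto_one_div_add_atTop_nhds_zero_nat
      simpa using (tendsto_const_nhds.sub this)
    · filter_upwards with k
      have : (0:ℝ) < 1 / (k + 1) := by positivity
      simp [mem_Iio]; linarith
  have seqgt : Tendsto (fun k : ℕ => a + 1 / (k + 1)) atTop (𝓝[>] a) := by
    apply tendsto_nhdsWithin_of_tendsto_nhds_of_eventually_within
    · have : Tendsto (fun k : ℕ => 1 / ((k : ℝ) + 1)) atTop (𝓝 0) :=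
        tendsto_one_div_add_atTop_nhds_zero_nat
      simpa using (tendsto_const_nhds.add this)
    · filter_upwards with k
      have : (0:ℝ) < 1 / (k + 1) := by positivity
      simp [mem_Ioi]; linarith
  have hleft : Tendsto (fun k : ℕ => F (a - 1 / (k + 1))) atTop (𝓝 (F a)) := by
    have hmono : Monotone fun k : ℕ => Ioc (0:ℝ) (a - 1 / (k + 1)) := by
      intro i j hij
      apply Ioc_subset_Ioc_right
      have h1 : (1:ℝ) / (j + 1) ≤ 1 / (i + 1) := by
        apply one_div_le_one_div_of_le (by positivity)
        have := (Nat.cast_le (α := ℝ)).2 hij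
        linarith
      linarith
    have hU : (⋃ k : ℕ, Ioc (0:ℝ) (a - 1 / (k + 1))) = Ioo 0 a := by
      ext x
      simp only [mem_iUnion, mem_Ioc, mem_Ioo]
      constructor
      · rintro ⟨k, hx0, hxk⟩
        refine ⟨hx0, lt_of_le_of_lt hxk ?_⟩
        have : (0:ℝ) < 1 / (k + 1) := by positivity
        linarith
      · rintro ⟨hx0, hxa⟩
        obtain ⟨k, hk⟩ := exists_nat_one_div_lt (sub_pos.2 hxa)
        exact ⟨k, hx0, by linarith⟩
    have h1 : Tendsto (fun k : ℕ => ν (Ioc (0:ℝ) (a - 1 / (k + 1)))) atTop (𝓝 (ν (Ioo 0 a))) := by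
      simpa only [Function.comp_def, hU] using tendsto_measure_iUnion_atTop (μ := ν) hmono
    have h2 : ν (Ioo 0 a) = ν (Ioc 0 a) := by
      apply le_antisymm (measure_mono Ioo_subset_Ioc_self)
      calc ν (Ioc 0 a) ≤ ν (Ioo 0 a ∪ {a}) := measure_mono (by
              intro x hx
              rcases eq_or_lt_of_le hx.2 with h | h
              · exact Or.inr (by simp [h])
              · exact Or.inl ⟨hx.1, h⟩)
        _ ≤ ν (Ioo 0 a) + ν {a} := measure_union_le _ _
        _ = ν (Ioo 0 a) := by rw [hna a, add_zero]
    exact (ENNReal.tendsto_toReal (measure_ne_top ν _)).comp (h2 ▸ h1)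
  have hright : Tendsto (fun k : ℕ => F (a + 1 / (k + 1))) atTop (𝓝 (F a)) := by
    have hanti : Antitone fun k : ℕ => Ioc (0:ℝ) (a + 1 / (k + 1)) := by
      intro i j hij
      apply Ioc_subset_Ioc_right
      have h1 : (1:ℝ) / (j + 1) ≤ 1 / (i + 1) := by
        apply one_div_le_one_div_of_le (by positivity)
        have := (Nat.cast_le (α := ℝ)).2 hij
        linarith
      linarith
    have hI : (⋂ k : ℕ, Ioc (0:ℝ) (a + 1 / (k + 1))) = Ioc 0 a := by
      ext x
      simp only [mem_iInter, mem_Ioc]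
      constructor
      · intro h
        refine ⟨(h 0).1, le_of_forall_pos_le_add fun ε hε => ?_⟩
        obtain ⟨k, hk⟩ := exists_nat_one_div_lt hε
        exact le_trans (h k).2 (by linarith)
      · rintro ⟨hx0, hxa⟩ k
        have : (0:ℝ) < 1 / (k + 1) := by positivity
        exact ⟨hx0, by linarith⟩
    have h1 : Tendsto (fun k : ℕ => ν (Ioc (0:ℝ) (a + 1 / (k + 1)))) atTop (𝓝 (ν (Ioc 0 a))) := by
      simpa only [Function.comp_def, hI] using tendsto_measure_iInter_atTop (μ := ν)
        (fun k => measurableSet_Ioc.nullMeasurableSet) hanti ⟨0, measure_ne_top ν _⟩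
    exact (ENNReal.tendsto_toReal (measure_ne_top ν _)).comp h1
  rw [mono.continuousAt_iff_leftLim_eq_rightLim]
  have hL : Function.leftLim F a = F a := by
    refine leftLim_eq_of_tendsto ?_
    have h1 := mono.tendsto_leftLim a
    have h2 := h1.comp seqlt
    have := tendsto_nhds_unique h2 hleft
    rwa [this] at h1
  have hR : Function.rightLim F a = F a := by
    refine rightLim_eq_of_tendsto ?_
    have h1 := mono.tendsto_rightLim a
    have h2 := h1.comp seqgt
    have := tendsto_nhds_unique h2 hright
    rwa [this] at h1
  rw [hL, hR]

lemma sq_setIntegral_le {f : ℝ → ℝ} {s : Set ℝ} {μ : Measure ℝ} (hs : MeasurableSet s)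
    (hμ : μ s ≠ ⊤) (hf : IntegrableOn f s μ) (hf2 : IntegrableOn (fun x => f x ^ 2) s μ) :
    (∫ x in s, f x ∂μ) ^ 2 ≤ (μ s).toReal * ∫ x in s, f x ^ 2 ∂μ := by
  set m := (μ s).toReal with hm
  rcases eq_or_lt_of_le (ENNReal.toReal_nonneg : 0 ≤ m) with h0 | h0
  · have : μ s = 0 := by
      rcases (ENNReal.toReal_eq_zero_iff (μ s)).1 h0.symm with h | h
      · exact h
      · exact absurd h hμ
    rw [Measure.restrict_eq_zero.2 this]
    simp
  · set A := ∫ x in s, f x ∂μ with hA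
    set B := ∫ x in s, f x ^ 2 ∂μ with hB
    set c := A / m with hc
    have e1 : IntegrableOn (fun x => f x ^ 2 - 2 * c * f x) s μ := hf2.sub (hf.const_mul (2 * c))
    have e2 : IntegrableOn (fun _ : ℝ => c ^ 2) s μ := integrableOn_const hμ
    have key : 0 ≤ B - 2 * c * A + c ^ 2 * m := by
      have hnn : 0 ≤ ∫ x in s, (f x - c) ^ 2 ∂μ :=
        setIntegral_nonneg hs fun x _ => sq_nonneg _
      have hexp : ∫ x in s, (f x - c) ^ 2 ∂μ = B - 2 * c * A + c ^ 2 * m := by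
        have h1 : ∫ x in s, (f x - c) ^ 2 ∂μ
            = ∫ x in s, ((f x ^ 2 - 2 * c * f x) + c ^ 2) ∂μ :=
          integral_congr_ae (Filter.Eventually.of_forall fun x => by ring)
        rw [h1, integral_add e1 e2, integral_sub hf2 (hf.const_mul (2 * c)),
          MeasureTheory.integral_const_mul, MeasureTheory.integral_const]
        simp only [Measure.real, Measure.restrict_apply_univ, smul_eq_mul, ← hm, ← hA, ← hB]
        ring
      linarith [hexp ▸ hnn]
    have hcm : c * m = A := by rw [hc, div_mul_cancel₀ A h0.ne']
    nlinarith [key, h0, hcm]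

end Helpers

set_option maxHeartbeats 2000000 in
/-- For a nonatomic finite measure `ν` on `I = (0, l)` and any `n ∈ ℕ` there are
points `0 < t_1 < … < t_n < l` such that every `u ∈ W^1_2(I)` (represented as an
absolutely continuous function `u(x) = u(0) + ∫_0^x u'` with `u' ∈ L²`) vanishing
at `t_1, …, t_n` satisfies `∫_I |u|² dν ≤ (l/n²) ν(I) ∫_I |u'|² dt`. -/
theorem exists_partition_poincare (ν : Measure ℝ) [IsFiniteMeasure ν]
    (hna : ∀ x : ℝ, ν {x} = 0) (l : ℝ) (hl : 0 < l) (n : ℕ) (hn : 0 < n) :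
    ∃ t : Fin n → ℝ, StrictMono t ∧ (∀ k, t k ∈ Set.Ioo 0 l) ∧
      ∀ u u' : ℝ → ℝ,
        (∀ x ∈ Set.Icc 0 l, u x = u 0 + ∫ s in (0 : ℝ)..x, u' s) →
        IntervalIntegrable u' volume 0 l →
        IntervalIntegrable (fun s => (u' s) ^ 2) volume 0 l →
        (∀ k, u (t k) = 0) →
        (∫ x in Set.Ioo 0 l, (u x) ^ 2 ∂ν) ≤
          l / (n : ℝ) ^ 2 * (ν (Set.Ioo 0 l)).toReal * ∫ s in (0 : ℝ)..l, (u' s) ^ 2 := by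
  classical
  haveI : NoAtoms ν := ⟨hna⟩
  by_cases hM0 : ν (Ioo 0 l) = 0
  · -- degenerate case : both sides vanish
    refine ⟨fun k => l * (k + 1) / (n + 1), ?_, ?_, ?_⟩
    · intro j k hjk
      have hjk' : ((j : ℕ) : ℝ) < ((k : ℕ) : ℝ) := by exact_mod_cast hjk
      have hn1 : (0:ℝ) < (n:ℝ) + 1 := by positivity
      apply (div_lt_div_iff_of_pos_right hn1).2
      nlinarith
    · intro k
      constructor
      · positivity
      · rw [div_lt_iff₀ (by positivity)]
        have : ((k : ℕ) : ℝ) < n := by exact_mod_cast k.2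
        nlinarith
    · intro u u' hu hu' hu'2 hz
      rw [Measure.restrict_eq_zero.2 hM0, integral_zero_measure, hM0]
      simp
  · -- main case
    have hM : 0 < (ν (Ioo 0 l)).toReal := ENNReal.toReal_pos hM0 (measure_ne_top ν _)
    set M := (ν (Ioo 0 l)).toReal with hMdef
    set F : ℝ → ℝ := fun x => (ν (Ioc 0 x)).toReal with hFdef
    have Fcont : Continuous F := cdf_cont ν hna
    have Fmono : Monotone F := fun x y hxy =>
      ENNReal.toReal_mono (measure_ne_top ν _) (measure_mono (Ioc_subset_Ioc_right hxy))
    set G : ℝ → ℝ := fun x => F x + M / l * x with hGdef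
    have Gcont : Continuous G := Fcont.add (continuous_const.mul continuous_id)
    have Gsm : StrictMono G := by
      intro x y hxy
      have h1 : M / l * x < M / l * y := by
        apply mul_lt_mul_of_pos_left hxy
        positivity
      have h2 := Fmono hxy.le
      show F x + M / l * x < F y + M / l * y
      linarith
    have hG0 : G 0 = 0 := by simp [hGdef, hFdef]
    have hFl : F l = M := by
      have hν : ν (Ioc 0 l) = ν (Ioo 0 l) := by
        apply le_antisymm _ (measure_mono Ioo_subset_Ioc_self)
        calc ν (Ioc 0 l) ≤ ν (Ioo 0 l ∪ {l}) := measure_mono (by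
                intro x hx
                rcases eq_or_lt_of_le hx.2 with h | h
                · exact Or.inr (by simp [h])
                · exact Or.inl ⟨hx.1, h⟩)
          _ ≤ ν (Ioo 0 l) + ν {l} := measure_union_le _ _
          _ = ν (Ioo 0 l) := by rw [hna, add_zero]
      simp only [hFdef, hMdef, hν]
    have hGl : G l = 2 * M := by
      show F l + M / l * l = 2 * M
      rw [hFl]
      field_simp
      ring
    -- choose the partition points by the intermediate value theorem
    have hchoice : ∀ k : Fin n, ∃ x ∈ Icc 0 l, G x = 2 * M * (k + 1) / (n + 1) := by
      intro k
      have hy : 2 * M * ((k : ℝ) + 1) / ((n : ℝ) + 1) ∈ Icc (G 0) (G l) := by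
        rw [hG0, hGl]
        constructor
        · positivity
        · rw [div_le_iff₀ (by positivity)]
          have : ((k : ℕ) : ℝ) < n := by exact_mod_cast k.2
          nlinarith
      obtain ⟨x, hx, hGx⟩ := intermediate_value_Icc hl.le Gcont.continuousOn hy
      exact ⟨x, hx, hGx⟩
    choose t ht hGt using hchoice
    have htmem : ∀ k, t k ∈ Ioo 0 l := by
      intro k
      have hy0 : (0:ℝ) < 2 * M * ((k : ℝ) + 1) / ((n : ℝ) + 1) := by positivity
      have hyl : 2 * M * ((k : ℝ) + 1) / ((n : ℝ) + 1) < 2 * M := by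
        rw [div_lt_iff₀ (by positivity)]
        have : ((k : ℕ) : ℝ) < n := by exact_mod_cast k.2
        nlinarith
      constructor
      · rcases eq_or_lt_of_le (ht k).1 with h | h
        · exfalso
          have h2 := hGt k
          rw [← h, hG0] at h2
          linarith
        · exact h
      · rcases eq_or_lt_of_le (ht k).2 with h | h
        · exfalso
          have h2 := hGt k
          rw [h, hGl] at h2
          linarith
        · exact h
    have htsm : StrictMono t := by
      intro j k hjk
      rw [← Gsm.lt_iff_lt, hGt, hGt]
      have hjk' : ((j : ℕ) : ℝ) < ((k : ℕ) : ℝ) := by exact_mod_cast hjk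
      apply (div_lt_div_iff_of_pos_right (by positivity)).2
      nlinarith
    refine ⟨t, htsm, htmem, ?_⟩
    intro u u' hu hu' hu'2 hz
    -- the partition including the endpoints
    set τ : ℕ → ℝ := fun k => if k = 0 then 0 else if h : k ≤ n then t ⟨k - 1, by omega⟩ else l
      with hτdef
    have hτ0 : τ 0 = 0 := by simp [hτdef]
    have hτlast : τ (n + 1) = l := by simp [hτdef]
    have hτmid : ∀ k (hk1 : 1 ≤ k) (hkn : k ≤ n), τ k = t ⟨k - 1, by omega⟩ := by
      intro k hk1 hkn
      show (if k = 0 then (0:ℝ) else if h : k ≤ n then t ⟨k - 1, by omega⟩ else l) = _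
      rw [if_neg (by omega), dif_pos hkn]
    have hGτ : ∀ k, k ≤ n + 1 → G (τ k) = 2 * M * k / (n + 1) := by
      intro k hk
      rcases Nat.eq_zero_or_pos k with rfl | hk0
      · simp [hτ0, hG0]
      rcases eq_or_lt_of_le hk with rfl | hlt
      · rw [hτlast, hGl]
        push_cast
        field_simp
      · have hkn : k ≤ n := by omega
        rw [hτmid k hk0 hkn, hGt]
        congr 1
        have : ((k : ℝ)) - 1 + 1 = (k : ℝ) := by ring
        push_cast [Nat.cast_sub hk0]
        ring
    have hτmem : ∀ k, k ≤ n + 1 → τ k ∈ Icc 0 l := by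
      intro k hk
      rcases Nat.eq_zero_or_pos k with rfl | hk0
      · rw [hτ0]; exact ⟨le_refl 0, hl.le⟩
      rcases eq_or_lt_of_le hk with rfl | hlt
      · rw [hτlast]; exact ⟨hl.le, le_refl l⟩
      · have hkn : k ≤ n := by omega
        rw [hτmid k hk0 hkn]
        exact ⟨(htmem _).1.le, (htmem _).2.le⟩
    have hτlt : ∀ k, k ≤ n → τ k < τ (k + 1) := by
      intro k hk
      rw [← Gsm.lt_iff_lt, hGτ k (by omega), hGτ (k + 1) (by omega)]
      apply (div_lt_div_iff_of_pos_right (by positivity)).2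
      push_cast
      nlinarith
    -- the key product bound for each subinterval
    have key : ∀ k, k ≤ n → (ν (Ioc (τ k) (τ (k + 1)))).toReal * (τ (k + 1) - τ k)
        ≤ l * M / (n : ℝ) ^ 2 := by
      intro k hk
      have ha := hτmem k (by omega)
      have hb := hτmem (k + 1) (by omega)
      have hab := (hτlt k hk).le
      have hν : (ν (Ioc (τ k) (τ (k + 1)))).toReal = F (τ (k + 1)) - F (τ k) := by
        have hdisj : Disjoint (Ioc (0:ℝ) (τ k)) (Ioc (τ k) (τ (k + 1))) := (Ioc_disjoint_Ioc_of_le le_rfl)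
        have hun : Ioc (0:ℝ) (τ k) ∪ Ioc (τ k) (τ (k + 1)) = Ioc 0 (τ (k + 1)) :=
          Ioc_union_Ioc_eq_Ioc ha.1 hab
        have hm : ν (Ioc 0 (τ (k + 1))) = ν (Ioc 0 (τ k)) + ν (Ioc (τ k) (τ (k + 1))) := by
          rw [← hun, measure_union hdisj measurableSet_Ioc]
        have h1 := congrArg ENNReal.toReal hm
        rw [ENNReal.toReal_add (measure_ne_top ν _) (measure_ne_top ν _)] at h1
        have e1 : F (τ (k + 1)) = (ν (Ioc 0 (τ (k + 1)))).toReal := rfl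
        have e2 : F (τ k) = (ν (Ioc 0 (τ k))).toReal := rfl
        linarith
      have hgap : (F (τ (k + 1)) - F (τ k)) + M / l * (τ (k + 1) - τ k) = 2 * M / (n + 1) := by
        have h1 := hGτ k (by omega)
        have h2 := hGτ (k + 1) (by omega)
        have h3 : G (τ (k + 1)) - G (τ k) = 2 * M / (n + 1) := by
          rw [h1, h2]
          push_cast
          field_simp
          ring
        have eG : ∀ x, G x = F x + M / l * x := fun x => rfl
        rw [eG, eG] at h3
        linarith
      rw [hν]
      set p := F (τ (k + 1)) - F (τ k) with hp
      set q := τ (k + 1) - τ k with hq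
      have hp0 : 0 ≤ p := sub_nonneg.2 (Fmono hab)
      have hq0 : 0 ≤ q := sub_nonneg.2 hab
      have h1 : p * (M / l * q) ≤ (M / ((n : ℝ) + 1)) ^ 2 := by
        have hgap2 : (p + M / l * q) ^ 2 = 4 * (M / ((n : ℝ) + 1)) ^ 2 := by
          rw [hgap]; ring
        nlinarith [sq_nonneg (p - M / l * q), hgap2]
      have h2 : p * q = (l / M) * (p * (M / l * q)) := by
        field_simp
      have h3 : p * q ≤ (l / M) * (M / ((n : ℝ) + 1)) ^ 2 := by
        rw [h2]
        apply mul_le_mul_of_nonneg_left h1 (by positivity)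
      have h4 : (l / M) * (M / ((n : ℝ) + 1)) ^ 2 = l * M / ((n : ℝ) + 1) ^ 2 := by
        field_simp
      have hncast : (0:ℝ) < (n:ℝ) := by exact_mod_cast hn
      have h5 : l * M / ((n : ℝ) + 1) ^ 2 ≤ l * M / (n : ℝ) ^ 2 := by
        have hb : (0:ℝ) < (n : ℝ) ^ 2 := by positivity
        have hc : ((n : ℝ)) ^ 2 ≤ ((n : ℝ) + 1) ^ 2 := by nlinarith
        have ha : (0:ℝ) ≤ l * M := by positivity
        exact div_le_div_of_nonneg_left ha hb hc
      linarith [h3, h4 ▸ h3]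
    -- integrability and continuity facts
    have hIcc : uIcc (0:ℝ) l = Icc 0 l := uIcc_of_le hl.le
    have hu'I : IntegrableOn u' (Icc 0 l) volume :=
      (intervalIntegrable_iff_integrableOn_Icc_of_le hl.le).1 hu'
    have hucont : ContinuousOn u (Icc 0 l) := by
      have hc : ContinuousOn (fun x => u 0 + ∫ s in (0:ℝ)..x, u' s) (Icc 0 l) := by
        apply continuousOn_const.add
        have := intervalIntegral.continuousOn_primitive_interval (a := 0) (b := l)
          (μ := volume) (f := u') (by rwa [hIcc])
        rwa [hIcc] at this
      exact hc.congr fun x hx => hu x hx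
    have huνint : IntegrableOn (fun x => (u x) ^ 2) (Icc 0 l) ν :=
      (hucont.pow 2).integrableOn_compact isCompact_Icc
    have hsub : ∀ a b : ℝ, a ∈ Icc 0 l → b ∈ Icc 0 l → uIcc a b ⊆ Icc 0 l := by
      intro a b ha hb
      rw [← hIcc]
      exact uIcc_subset_uIcc (by rwa [hIcc]) (by rwa [hIcc])
    have hu'sub : ∀ a b : ℝ, a ∈ Icc 0 l → b ∈ Icc 0 l → IntervalIntegrable u' volume a b :=
      fun a b ha hb => hu'.mono_set (by rw [hIcc]; exact hsub a b ha hb)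
    have hu'2sub : ∀ a b : ℝ, a ∈ Icc 0 l → b ∈ Icc 0 l →
        IntervalIntegrable (fun s => u' s ^ 2) volume a b :=
      fun a b ha hb => hu'2.mono_set (by rw [hIcc]; exact hsub a b ha hb)
    -- the bound on each subinterval of the partition
    have piece : ∀ k, k ≤ n → ∫ x in Ioc (τ k) (τ (k + 1)), (u x) ^ 2 ∂ν
        ≤ (ν (Ioc (τ k) (τ (k + 1)))).toReal *
          ((τ (k + 1) - τ k) * ∫ s in Ioc (τ k) (τ (k + 1)), u' s ^ 2) := by
      intro k hk
      have ha := hτmem k (by omega)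
      have hb := hτmem (k + 1) (by omega)
      have hab := (hτlt k hk).le
      obtain ⟨z, hza, hzb, huz⟩ : ∃ z, τ k ≤ z ∧ z ≤ τ (k + 1) ∧ u z = 0 := by
        rcases lt_or_ge k n with hkn | hkn
        · refine ⟨τ (k + 1), hab, le_refl _, ?_⟩
          have he : τ (k + 1) = t ⟨k + 1 - 1, by omega⟩ := hτmid (k + 1) (by omega) (by omega)
          rw [he]
          exact hz _
        · have hk' : k = n := le_antisymm hk hkn
          refine ⟨τ k, le_refl _, hab, ?_⟩
          have he : τ k = t ⟨k - 1, by omega⟩ := hτmid k (by omega) (by omega)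
          rw [he]
          exact hz _
      have main2 : ∀ c d : ℝ, τ k ≤ c → c ≤ d → d ≤ τ (k + 1) →
          (∫ s in c..d, u' s) ^ 2 ≤ (τ (k + 1) - τ k) * ∫ s in Ioc (τ k) (τ (k + 1)), u' s ^ 2 := by
        intro c d hc hcd hd
        have hcI : c ∈ Icc 0 l := ⟨ha.1.trans hc, ((hcd.trans hd).trans hb.2)⟩
        have hdI : d ∈ Icc 0 l := ⟨ha.1.trans (hc.trans hcd), hd.trans hb.2⟩
        rw [intervalIntegral.integral_of_le hcd]
        have hvol : volume (Ioc c d) ≠ ⊤ := by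
          rw [Real.volume_Ioc]; exact ENNReal.ofReal_ne_top
        have hint1 : IntegrableOn u' (Ioc c d) volume :=
          hu'I.mono_set (Ioc_subset_Icc_self.trans (Icc_subset_Icc hcI.1 hdI.2))
        have hint2 : IntegrableOn (fun s => u' s ^ 2) (Ioc c d) volume :=
          ((intervalIntegrable_iff_integrableOn_Icc_of_le hcd).1
            (hu'2sub c d hcI hdI)).mono_set Ioc_subset_Icc_self
        have hCS := sq_setIntegral_le measurableSet_Ioc hvol hint1 hint2
        have hvol2 : (volume (Ioc c d)).toReal = d - c := by
          rw [Real.volume_Ioc, ENNReal.toReal_ofReal (sub_nonneg.2 hcd)]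
        have hmono : ∫ s in Ioc c d, u' s ^ 2 ≤ ∫ s in Ioc (τ k) (τ (k + 1)), u' s ^ 2 := by
          apply setIntegral_mono_set
          · exact ((intervalIntegrable_iff_integrableOn_Icc_of_le hab).1
              (hu'2sub _ _ ha hb)).mono_set Ioc_subset_Icc_self
          · exact Filter.Eventually.of_forall fun x => sq_nonneg _
          · exact HasSubset.Subset.eventuallyLE (Ioc_subset_Ioc hc hd)
        calc (∫ s in Ioc c d, u' s) ^ 2
            ≤ (volume (Ioc c d)).toReal * ∫ s in Ioc c d, u' s ^ 2 := hCS
          _ = (d - c) * ∫ s in Ioc c d, u' s ^ 2 := by rw [hvol2]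
          _ ≤ (τ (k + 1) - τ k) * ∫ s in Ioc (τ k) (τ (k + 1)), u' s ^ 2 := by
              apply mul_le_mul (by linarith) hmono
                (setIntegral_nonneg measurableSet_Ioc fun x _ => sq_nonneg _) (by linarith)
      have pointwise : ∀ x ∈ Ioc (τ k) (τ (k + 1)),
          (u x) ^ 2 ≤ (τ (k + 1) - τ k) * ∫ s in Ioc (τ k) (τ (k + 1)), u' s ^ 2 := by
        intro x hx
        have hxI : x ∈ Icc 0 l := ⟨ha.1.trans hx.1.le, hx.2.trans hb.2⟩
        have hzI : z ∈ Icc 0 l := ⟨ha.1.trans hza, hzb.trans hb.2⟩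
        have hux : u x = ∫ s in z..x, u' s := by
          have h1 := hu x hxI
          have h2 := hu z hzI
          have h3 := intervalIntegral.integral_interval_sub_left
            (hu'sub 0 x (left_mem_Icc.2 hl.le) hxI) (hu'sub 0 z (left_mem_Icc.2 hl.le) hzI)
          rw [huz] at h2
          linarith
        rw [hux]
        rcases le_total z x with hzx | hxz
        · exact main2 z x hza hzx hx.2
        · rw [intervalIntegral.integral_symm x z, neg_sq]
          exact main2 x z hx.1.le hxz hzb
      have hnorm := norm_setIntegral_le_of_norm_le_const_ae' (μ := ν)
        (measure_lt_top ν _)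
        (Filter.Eventually.of_forall fun x hx => by
          have hpx := pointwise x hx
          calc ‖u x ^ 2‖ = u x ^ 2 := by
                rw [Real.norm_eq_abs, abs_of_nonneg (sq_nonneg (u x))]
            _ ≤ _ := hpx)
      calc ∫ x in Ioc (τ k) (τ (k + 1)), (u x) ^ 2 ∂ν
          ≤ ‖∫ x in Ioc (τ k) (τ (k + 1)), (u x) ^ 2 ∂ν‖ := by
            rw [Real.norm_eq_abs]; exact le_abs_self _
        _ ≤ ((τ (k + 1) - τ k) * ∫ s in Ioc (τ k) (τ (k + 1)), u' s ^ 2) *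
              (ν (Ioc (τ k) (τ (k + 1)))).toReal := hnorm
        _ = (ν (Ioc (τ k) (τ (k + 1)))).toReal *
              ((τ (k + 1) - τ k) * ∫ s in Ioc (τ k) (τ (k + 1)), u' s ^ 2) := by ring
    -- decompose both integrals along the partition
    have hsum : ∫ x in Ioc (0:ℝ) l, (u x) ^ 2 ∂ν
        = ∑ k ∈ Finset.range (n + 1), ∫ x in Ioc (τ k) (τ (k + 1)), (u x) ^ 2 ∂ν := by
      have aux : ∀ m, m ≤ n + 1 → ∫ x in Ioc (0:ℝ) (τ m), (u x) ^ 2 ∂ν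
          = ∑ k ∈ Finset.range m, ∫ x in Ioc (τ k) (τ (k + 1)), (u x) ^ 2 ∂ν := by
        intro m
        induction m with
        | zero => intro _; rw [hτ0]; simp
        | succ m ih =>
          intro hm
          have hm' : m ≤ n := by omega
          have h0m : 0 ≤ τ m := (hτmem m (by omega)).1
          have hmm1 : τ m ≤ τ (m + 1) := (hτlt m hm').le
          have hun : Ioc (0:ℝ) (τ m) ∪ Ioc (τ m) (τ (m + 1)) = Ioc 0 (τ (m + 1)) :=
            Ioc_union_Ioc_eq_Ioc h0m hmm1
          have hint1 : IntegrableOn (fun x => (u x) ^ 2) (Ioc 0 (τ m)) ν :=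
            huνint.mono_set (Ioc_subset_Icc_self.trans
              (Icc_subset_Icc le_rfl (hτmem m (by omega)).2))
          have hint2 : IntegrableOn (fun x => (u x) ^ 2) (Ioc (τ m) (τ (m + 1))) ν :=
            huνint.mono_set (Ioc_subset_Icc_self.trans
              (Icc_subset_Icc h0m (hτmem (m + 1) (by omega)).2))
          rw [Finset.sum_range_succ, ← ih (by omega),
            ← setIntegral_union (Ioc_disjoint_Ioc_of_le le_rfl) measurableSet_Ioc hint1 hint2, hun]
      have h := aux (n + 1) le_rfl
      rwa [hτlast] at h
    have hsum' : ∫ s in (0:ℝ)..l, u' s ^ 2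
        = ∑ k ∈ Finset.range (n + 1), ∫ s in Ioc (τ k) (τ (k + 1)), u' s ^ 2 := by
      have hints : ∀ k, k < n + 1 →
          IntervalIntegrable (fun s => u' s ^ 2) volume (τ k) (τ (k + 1)) :=
        fun k hk => hu'2sub _ _ (hτmem k (by omega)) (hτmem (k + 1) (by omega))
      have h := intervalIntegral.sum_integral_adjacent_intervals (a := τ) (μ := volume) hints
      rw [hτ0, hτlast] at h
      rw [← h]
      refine Finset.sum_congr rfl fun k hk => ?_
      exact intervalIntegral.integral_of_le (hτlt k (Nat.lt_succ_iff.1 (Finset.mem_range.1 hk))).le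
    calc ∫ x in Ioo 0 l, (u x) ^ 2 ∂ν
        = ∫ x in Ioc (0:ℝ) l, (u x) ^ 2 ∂ν := by haveI : NullSingletonClass ν := ⟨hna⟩; exact integral_Ioc_eq_integral_Ioo.symm
      _ = ∑ k ∈ Finset.range (n + 1), ∫ x in Ioc (τ k) (τ (k + 1)), (u x) ^ 2 ∂ν := hsum
      _ ≤ ∑ k ∈ Finset.range (n + 1),
            (l * M / (n : ℝ) ^ 2) * ∫ s in Ioc (τ k) (τ (k + 1)), u' s ^ 2 := by
          apply Finset.sum_le_sum
          intro k hk
          have hk' : k ≤ n := Nat.lt_succ_iff.1 (Finset.mem_range.1 hk)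
          have h1 := piece k hk'
          have hE : 0 ≤ ∫ s in Ioc (τ k) (τ (k + 1)), u' s ^ 2 :=
            setIntegral_nonneg measurableSet_Ioc fun x _ => sq_nonneg (u' x)
          have h3 : ((ν (Ioc (τ k) (τ (k + 1)))).toReal * (τ (k + 1) - τ k)) *
              (∫ s in Ioc (τ k) (τ (k + 1)), u' s ^ 2)
              ≤ (l * M / (n : ℝ) ^ 2) * ∫ s in Ioc (τ k) (τ (k + 1)), u' s ^ 2 :=
            mul_le_mul_of_nonneg_right (key k hk') hE
          calc ∫ x in Ioc (τ k) (τ (k + 1)), (u x) ^ 2 ∂ν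
              ≤ (ν (Ioc (τ k) (τ (k + 1)))).toReal *
                ((τ (k + 1) - τ k) * ∫ s in Ioc (τ k) (τ (k + 1)), u' s ^ 2) := h1
            _ = ((ν (Ioc (τ k) (τ (k + 1)))).toReal * (τ (k + 1) - τ k)) *
                ∫ s in Ioc (τ k) (τ (k + 1)), u' s ^ 2 := by ring
            _ ≤ (l * M / (n : ℝ) ^ 2) * ∫ s in Ioc (τ k) (τ (k + 1)), u' s ^ 2 := h3
      _ = (l * M / (n : ℝ) ^ 2) *
            ∑ k ∈ Finset.range (n + 1), ∫ s in Ioc (τ k) (τ (k + 1)), u' s ^ 2 := by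
          rw [Finset.mul_sum]
      _ = l / (n : ℝ) ^ 2 * M * ∫ s in (0:ℝ)..l, u' s ^ 2 := by
          rw [hsum']
          ring
end

section
/- Let u ∈ W^1_2([0,1]) with u(0)=0 and κ > 0. Then for all x ∈ (0,1]: |u(x)|²/x ≤ (1/(2κ))(1 + √(1+4κ)) ( ∫_0^1 |u'(t)|² dt + κ ∫_0^1 |u(t)|²/t² dt ), and the right-hand side is finite. -/
open MeasureTheory Set intervalIntegral Real

lemma tri_swap (a b : ℝ) (φ ψ : ℝ → ℝ)
    (hφ : IntegrableOn φ (Ioc a b)) (hψ : IntegrableOn ψ (Ioc a b)) :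
    ∫ t in Ioc a b, ψ t * ∫ s in Ioc a b, (if s ≤ t then φ s else 0)
      = ∫ s in Ioc a b, φ s * ∫ t in Ioc a b, (if s ≤ t then ψ t else 0) := by
  set μ := volume.restrict (Ioc a b)
  have hmeas : MeasurableSet {p : ℝ × ℝ | p.2 ≤ p.1} :=
    measurableSet_le measurable_snd measurable_fst
  have hInt : Integrable (Function.uncurry fun t s => if s ≤ t then ψ t * φ s else 0)
      (μ.prod μ) := by
    have hprod : Integrable (fun p : ℝ × ℝ => ψ p.1 * φ p.2) (μ.prod μ) :=
      hψ.mul_prod hφ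
    refine hprod.norm.mono' ?_ ?_
    · have : (Function.uncurry fun t s => if s ≤ t then ψ t * φ s else 0)
          = {p : ℝ × ℝ | p.2 ≤ p.1}.indicator (fun p => ψ p.1 * φ p.2) := by
        ext p
        simp [Function.uncurry, Set.indicator_apply]
      rw [this]
      exact (hψ.1.comp_fst.mul hφ.1.comp_snd).indicator hmeas
    · filter_upwards with p
      simp only [Function.uncurry]
      split_ifs <;> simp <;> positivity
  have key := integral_integral_swap hInt
  have L : ∀ t, ψ t * ∫ s, (if s ≤ t then φ s else 0) ∂μ
      = ∫ s, (if s ≤ t then ψ t * φ s else 0) ∂μ := by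
    intro t; rw [← MeasureTheory.integral_const_mul]; congr 1; ext s; split_ifs <;> ring
  have R : ∀ s, φ s * ∫ t, (if s ≤ t then ψ t else 0) ∂μ
      = ∫ t, (if s ≤ t then ψ t * φ s else 0) ∂μ := by
    intro s; rw [← MeasureTheory.integral_const_mul]; congr 1; ext t; split_ifs <;> ring
  simp_rw [L, R]
  exact key

lemma ite_int_left (a b t : ℝ) (ht : t ≤ b) (φ : ℝ → ℝ) :
    (∫ s in Ioc a b, (if s ≤ t then φ s else 0)) = ∫ s in Ioc a t, φ s := by
  have h1 : (fun s => if s ≤ t then φ s else 0) = (Iic t).indicator φ := by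
    ext s; simp [Set.indicator_apply]
  rw [h1, MeasureTheory.integral_indicator measurableSet_Iic, Measure.restrict_restrict measurableSet_Iic]
  congr 1
  rw [Set.inter_comm, Set.Ioc_inter_Iic, min_eq_right ht]

lemma ite_int_right (a b s : ℝ) (hs : a < s) (ψ : ℝ → ℝ) :
    (∫ t in Ioc a b, (if s ≤ t then ψ t else 0)) = ∫ t in Ioc s b, ψ t := by
  have h1 : (fun t => if s ≤ t then ψ t else 0) = (Ici s).indicator ψ := by
    ext t; simp [Set.indicator_apply]
  rw [h1, MeasureTheory.integral_indicator measurableSet_Ici, Measure.restrict_restrict measurableSet_Ici]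
  have h2 : Ici s ∩ Ioc a b = Icc s b := by
    ext x
    simp only [Set.mem_inter_iff, Set.mem_Ici, Set.mem_Ioc, Set.mem_Icc]
    constructor
    · rintro ⟨h, _, h2⟩; exact ⟨h, h2⟩
    · rintro ⟨h, h2⟩; exact ⟨h, lt_of_lt_of_le hs h, h2⟩
  rw [h2, ← integral_Icc_eq_integral_Ioc]

lemma sq_identity (a b : ℝ) (hab : a < b) (f F : ℝ → ℝ)
    (hf : IntegrableOn f (Ioc a b))
    (hF : ∀ t ∈ Ioc a b, F t = F a + ∫ s in Ioc a t, f s)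
    (hFf : IntegrableOn (fun s => f s * F s) (Ioc a b)) :
    F b ^ 2 - F a ^ 2 = 2 * ∫ s in Ioc a b, f s * F s := by
  have key := tri_swap a b f f hf hf
  have e1 : (∫ t in Ioc a b, f t * ∫ s in Ioc a b, (if s ≤ t then f s else 0))
      = ∫ t in Ioc a b, f t * (F t - F a) := by
    refine setIntegral_congr_fun measurableSet_Ioc fun t ht => ?_
    rw [ite_int_left a b t ht.2 f, hF t ht]; ring
  have hsplit : ∀ s ∈ Ioc a b, (∫ t in Ioc s b, f t) = F b - F s := by
    intro s hs
    have h1 : (∫ t in Ioc a s, f t) + ∫ t in Ioc s b, f t = ∫ t in Ioc a b, f t := by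
      rw [← MeasureTheory.setIntegral_union (Set.Ioc_disjoint_Ioc_of_le le_rfl) measurableSet_Ioc
        (hf.mono_set (Set.Ioc_subset_Ioc_right hs.2)) (hf.mono_set (Set.Ioc_subset_Ioc_left hs.1.le)),
        Set.Ioc_union_Ioc_eq_Ioc hs.1.le hs.2]
    have h2 := hF s hs
    have h3 := hF b ⟨hab, le_refl b⟩
    linarith
  have e2 : (∫ s in Ioc a b, f s * ∫ t in Ioc a b, (if s ≤ t then f t else 0))
      = ∫ s in Ioc a b, f s * (F b - F s) := by
    refine setIntegral_congr_fun measurableSet_Ioc fun s hs => ?_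
    rw [ite_int_right a b s hs.1 f, hsplit s hs]
  rw [e1, e2] at key
  have hfint : IntegrableOn f (Ioc a b) := hf
  have expand1 : (∫ t in Ioc a b, f t * (F t - F a))
      = (∫ t in Ioc a b, f t * F t) - (∫ t in Ioc a b, f t) * F a := by
    rw [← MeasureTheory.integral_mul_const]
    rw [← integral_sub hFf (hfint.mul_const (F a))]
    congr 1; ext t; ring
  have expand2 : (∫ s in Ioc a b, f s * (F b - F s))
      = (∫ s in Ioc a b, f s) * F b - (∫ s in Ioc a b, f s * F s) := by
    rw [← MeasureTheory.integral_mul_const, ← integral_sub (hfint.mul_const (F b)) hFf]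
    congr 1; ext s; ring
  rw [expand1, expand2] at key
  have h3 := hF b ⟨hab, le_refl b⟩
  have : (∫ s in Ioc a b, f s) = F b - F a := by linarith
  rw [this] at key
  nlinarith [key]

lemma cs_sq (a b : ℝ) (hab : a ≤ b) (f : ℝ → ℝ)
    (hf : IntegrableOn f (Ioc a b))
    (hf2 : IntegrableOn (fun s => f s ^ 2) (Ioc a b)) :
    (∫ s in Ioc a b, f s) ^ 2 ≤ (b - a) * ∫ s in Ioc a b, f s ^ 2 := by
  rcases eq_or_lt_of_le hab with rfl | hlt
  · simp
  set m : ℝ := b - a with hm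
  have hm0 : 0 < m := by simp [hm]; linarith
  set S : ℝ := ∫ s in Ioc a b, f s with hS
  set Q : ℝ := ∫ s in Ioc a b, f s ^ 2 with hQ
  set c : ℝ := S / m with hc
  have hconst : IntegrableOn (fun _ : ℝ => c ^ 2) (Ioc a b) :=
    integrableOn_const measure_Ioc_lt_top.ne
  have h0 : 0 ≤ ∫ s in Ioc a b, (f s - c) ^ 2 := integral_nonneg fun s => sq_nonneg _
  have he : (∫ s in Ioc a b, (f s - c) ^ 2) = Q - 2 * c * S + c ^ 2 * m := by
    have h1 : (fun s => (f s - c) ^ 2) = fun s => (f s ^ 2 - 2 * c * f s) + c ^ 2 := by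
      ext s; ring
    have hi1 : IntegrableOn (fun s => f s ^ 2 - 2 * c * f s) (Ioc a b) :=
      hf2.sub (hf.const_mul (2 * c))
    rw [h1, MeasureTheory.integral_add hi1 hconst,
      MeasureTheory.integral_sub hf2 (hf.const_mul (2 * c)),
      MeasureTheory.integral_const_mul, MeasureTheory.setIntegral_const,
      Real.volume_real_Ioc_of_le (by linarith), smul_eq_mul]
    ring
  rw [he] at h0
  have hcm : c * m = S := by
    rw [hc]; field_simp
  nlinarith [h0, hm0, sq_nonneg S]

lemma inv_sq_int (s : ℝ) (h0 : 0 < s) (h1 : s ≤ 1) :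
    (∫ t in Ioc s 1, (t ^ 2)⁻¹) = s⁻¹ - 1 := by
  rw [← intervalIntegral.integral_of_le h1]
  have h2 : ∀ t : ℝ, (t ^ 2)⁻¹ = t ^ (-2 : ℤ) := fun t => by
    rw [zpow_neg]; norm_cast
  simp_rw [h2]
  rw [integral_zpow (Or.inr ⟨by norm_num, by
    rw [Set.uIcc_of_le h1]; intro hc; exact absurd hc.1 (not_le.2 h0)⟩)]
  norm_num
  ring

lemma amgm1 (b c t : ℝ) (ht0 : 0 ≤ t) (ht1 : t ≤ 1) :
    2 * (b * c) * t ≤ (1 / 2) * c ^ 2 + 2 * b ^ 2 := by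
  have h1 : 2 * (b * c) ≤ (1 / 2) * c ^ 2 + 2 * b ^ 2 := by nlinarith [sq_nonneg (c - 2 * b)]
  have h2 : (0 : ℝ) ≤ (1 / 2) * c ^ 2 + 2 * b ^ 2 := by positivity
  nlinarith [mul_le_mul_of_nonneg_right h1 ht0, mul_le_mul_of_nonneg_left ht1 h2]

lemma amgm2 (b c s x α : ℝ) (hα : 0 < α) (hs : 0 ≤ s) (hsx : s ≤ x) :
    2 * (b * (c * s)) ≤ x * (α⁻¹ * b ^ 2 + α * c ^ 2) := by
  have hβ : α * α⁻¹ = 1 := mul_inv_cancel₀ (ne_of_gt hα)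
  have h1 : 2 * (b * c) ≤ α⁻¹ * b ^ 2 + α * c ^ 2 := by
    nlinarith [mul_nonneg (le_of_lt (inv_pos.2 hα)) (sq_nonneg (b - α * c))]
  have h2 : (0 : ℝ) ≤ α⁻¹ * b ^ 2 + α * c ^ 2 := by positivity
  nlinarith [mul_le_mul_of_nonneg_right h1 hs, mul_le_mul_of_nonneg_left hsx h2]

/-- Hardy–Sobolev inequality on `[0,1]`: if `u ∈ W^1_2([0,1])` (absolutely
continuous with `u' ∈ L²`) satisfies `u(0) = 0` and `κ > 0`, then the right-hand
side below is finite and for all `x ∈ (0,1]`,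
`|u(x)|²/x ≤ (1/(2κ))(1 + √(1+4κ)) (∫_0^1 |u'|² dt + κ ∫_0^1 |u|²/t² dt)`. -/
theorem hardy_sobolev_zero_one (κ : ℝ) (hκ : 0 < κ) (u u' : ℝ → ℝ)
    (hrep : ∀ x ∈ Set.Icc (0 : ℝ) 1, u x = u 0 + ∫ s in (0 : ℝ)..x, u' s)
    (hint' : IntervalIntegrable u' volume 0 1)
    (hint : IntervalIntegrable (fun s => (u' s) ^ 2) volume 0 1)
    (hu0 : u 0 = 0) :
    IntervalIntegrable (fun t => (u t) ^ 2 / t ^ 2) volume 0 1 ∧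
      ∀ x ∈ Set.Ioc (0 : ℝ) 1,
        (u x) ^ 2 / x ≤
          (1 / (2 * κ)) * (1 + Real.sqrt (1 + 4 * κ)) *
            ((∫ t in (0 : ℝ)..1, (u' t) ^ 2) +
              κ * ∫ t in (0 : ℝ)..1, (u t) ^ 2 / t ^ 2) := by
  have h01 : (0 : ℝ) ≤ 1 := zero_le_one
  set F : ℝ → ℝ := fun x => ∫ s in (0 : ℝ)..x, u' s with hFdef
  have hf : IntegrableOn u' (Ioc 0 1) volume :=
    (intervalIntegrable_iff_integrableOn_Ioc_of_le h01).1 hint'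
  have hf2 : IntegrableOn (fun s => u' s ^ 2) (Ioc 0 1) volume :=
    (intervalIntegrable_iff_integrableOn_Ioc_of_le h01).1 hint
  have hFcont : ContinuousOn F (Icc 0 1) := by
    have := continuousOn_primitive_interval' hint' left_mem_uIcc
    rwa [Set.uIcc_of_le h01] at this
  have huF : ∀ x ∈ Icc (0 : ℝ) 1, u x = F x := fun x hx => by
    rw [hrep x hx, hu0, zero_add]
  have hF0 : F 0 = 0 := intervalIntegral.integral_same
  have hFeq : ∀ a ∈ Icc (0 : ℝ) 1, ∀ t ∈ Icc (0 : ℝ) 1, a ≤ t →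
      F t = F a + ∫ s in Ioc a t, u' s := by
    intro a ha t ht hat
    have h1 : IntervalIntegrable u' volume 0 t := hint'.mono_set
      (by rw [Set.uIcc_of_le h01, Set.uIcc_of_le ht.1]; exact Icc_subset_Icc le_rfl ht.2)
    have h2 : IntervalIntegrable u' volume 0 a := hint'.mono_set
      (by rw [Set.uIcc_of_le h01, Set.uIcc_of_le ha.1]; exact Icc_subset_Icc le_rfl ha.2)
    have h3 := intervalIntegral.integral_interval_sub_left h1 h2
    rw [intervalIntegral.integral_of_le hat] at h3
    simp only [hFdef]
    linarith [h3]
  have hfF : IntegrableOn (fun s => u' s * F s) (Ioc 0 1) volume := by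
    have hIcc : IntegrableOn u' (Icc 0 1) volume :=
      (integrableOn_Icc_iff_integrableOn_Ioc).2 hf
    exact (hIcc.mul_continuousOn hFcont isCompact_Icc).mono_set Ioc_subset_Icc_self
  set A : ℝ := ∫ s in Ioc (0:ℝ) 1, u' s ^ 2 with hA
  have hA0 : 0 ≤ A := setIntegral_nonneg measurableSet_Ioc fun s _ => sq_nonneg _
  -- uniform Hardy bound on [ε, 1]
  have hgε : ∀ ε : ℝ, 0 < ε →
      IntegrableOn (fun t => F t ^ 2 / t ^ 2) (Ioc ε 1) volume := by
    intro ε hε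
    rcases le_or_gt ε 1 with hε1 | hε1
    · have hgcont : ContinuousOn (fun t => F t ^ 2 / t ^ 2) (Icc ε 1) := by
        refine ContinuousOn.div ((hFcont.mono (Icc_subset_Icc hε.le le_rfl)).pow 2)
          ((continuous_id.pow 2).continuousOn) fun t ht => ?_
        exact pow_ne_zero 2 (ne_of_gt (lt_of_lt_of_le hε ht.1))
      exact (hgcont.integrableOn_Icc).mono_set Ioc_subset_Icc_self
    · rw [Set.Ioc_eq_empty (by linarith)]
      exact integrableOn_empty
  have claim1 : ∀ ε : ℝ, 0 < ε → ε ≤ 1 →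
      (∫ t in Ioc ε 1, F t ^ 2 / t ^ 2) ≤ 6 * A := by
    intro ε hε hε1
    have hεIcc : ε ∈ Icc (0 : ℝ) 1 := ⟨hε.le, hε1⟩
    have hfε : IntegrableOn u' (Ioc ε 1) volume := hf.mono_set (Ioc_subset_Ioc_left hε.le)
    have hfFε : IntegrableOn (fun s => u' s * F s) (Ioc ε 1) volume :=
      hfF.mono_set (Ioc_subset_Ioc_left hε.le)
    have hgint := hgε ε hε
    have hf2ε : IntegrableOn (fun s => u' s ^ 2) (Ioc ε 1) volume :=
      hf2.mono_set (Ioc_subset_Ioc_left hε.le)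
    set Bε : ℝ := ∫ t in Ioc ε 1, F t ^ 2 / t ^ 2 with hBεdef
    have hid : ∀ t ∈ Ioc ε 1, F t ^ 2 = F ε ^ 2 + 2 * ∫ s in Ioc ε t, u' s * F s := by
      intro t ht
      have h := sq_identity ε t ht.1 u' F
        (hfε.mono_set (Ioc_subset_Ioc_right ht.2))
        (fun s hs => hFeq ε hεIcc s ⟨(hε.trans hs.1).le, hs.2.trans ht.2⟩ hs.1.le)
        (hfFε.mono_set (Ioc_subset_Ioc_right ht.2))
      linarith
    have hfFIcc : IntegrableOn (fun s => u' s * F s) (Icc ε 1) volume :=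
      (integrableOn_Icc_iff_integrableOn_Ioc).2 hfFε
    have hPcont : ContinuousOn (fun t => ∫ s in Ioc ε t, u' s * F s) (Icc ε 1) :=
      continuousOn_primitive hfFIcc
    have hψcont : ContinuousOn (fun t : ℝ => (t ^ 2)⁻¹) (Icc ε 1) :=
      ((continuous_id.pow 2).continuousOn).inv₀ fun t ht =>
        pow_ne_zero 2 (ne_of_gt (lt_of_lt_of_le hε ht.1))
    have hψ : IntegrableOn (fun t : ℝ => (t ^ 2)⁻¹) (Ioc ε 1) volume :=
      hψcont.integrableOn_Icc.mono_set Ioc_subset_Icc_self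
    have step1 : Bε = ∫ t in Ioc ε 1,
        (F ε ^ 2 * (t ^ 2)⁻¹ + 2 * ((t ^ 2)⁻¹ * ∫ s in Ioc ε t, u' s * F s)) := by
      refine setIntegral_congr_fun measurableSet_Ioc fun t ht => ?_
      have ht0 : t ^ 2 ≠ 0 := pow_ne_zero 2 (ne_of_gt (hε.trans ht.1))
      rw [hid t ht]
      field_simp
    have hint1 : IntegrableOn (fun t => F ε ^ 2 * (t ^ 2)⁻¹) (Ioc ε 1) volume :=
      hψ.const_mul _
    have hint2 : IntegrableOn
        (fun t => 2 * ((t ^ 2)⁻¹ * ∫ s in Ioc ε t, u' s * F s)) (Ioc ε 1) volume := by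
      have hc : ContinuousOn
          (fun t => 2 * ((t ^ 2)⁻¹ * ∫ s in Ioc ε t, u' s * F s)) (Icc ε 1) :=
        continuousOn_const.mul (hψcont.mul hPcont)
      exact hc.integrableOn_Icc.mono_set Ioc_subset_Icc_self
    have step2 : Bε = F ε ^ 2 * (∫ t in Ioc ε 1, (t ^ 2)⁻¹)
        + 2 * ∫ t in Ioc ε 1, (t ^ 2)⁻¹ * ∫ s in Ioc ε t, u' s * F s := by
      rw [step1, MeasureTheory.integral_add hint1 hint2, MeasureTheory.integral_const_mul,
        MeasureTheory.integral_const_mul]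
    have hswap := tri_swap ε 1 (fun s => u' s * F s) (fun t : ℝ => (t ^ 2)⁻¹) hfFε hψ
    have e1 : (∫ t in Ioc ε 1, (t ^ 2)⁻¹ * ∫ s in Ioc ε 1, (if s ≤ t then u' s * F s else 0))
        = ∫ t in Ioc ε 1, (t ^ 2)⁻¹ * ∫ s in Ioc ε t, u' s * F s :=
      setIntegral_congr_fun measurableSet_Ioc fun t ht => by
        rw [ite_int_left ε 1 t ht.2]
    have e2 : (∫ s in Ioc ε 1, (u' s * F s) * ∫ t in Ioc ε 1, (if s ≤ t then (t ^ 2)⁻¹ else 0))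
        = ∫ s in Ioc ε 1, (u' s * F s) * (s⁻¹ - 1) :=
      setIntegral_congr_fun measurableSet_Ioc fun s hs => by
        rw [ite_int_right ε 1 s hs.1, inv_sq_int s (hε.trans hs.1) hs.2]
    rw [e1, e2] at hswap
    have hmono : (∫ s in Ioc ε 1, (u' s * F s) * (s⁻¹ - 1))
        ≤ ∫ s in Ioc ε 1, ((1 / 4) * (F s ^ 2 / s ^ 2) + u' s ^ 2) := by
      refine setIntegral_mono_on ?_ ?_ measurableSet_Ioc fun s hs => ?_
      · have hc : ContinuousOn (fun s : ℝ => s⁻¹ - 1) (Icc ε 1) :=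
          (continuousOn_id.inv₀ fun t ht =>
            ne_of_gt (lt_of_lt_of_le hε ht.1)).sub continuousOn_const
        exact (hfFIcc.mul_continuousOn hc isCompact_Icc).mono_set Ioc_subset_Icc_self
      · exact (hgint.const_mul _).add hf2ε
      · have hs0 : 0 < s := hε.trans hs.1
        have h := amgm1 (u' s) (F s / s) (1 - s) (by linarith [hs.2]) (by linarith)
        have heq : 2 * (u' s * (F s / s)) * (1 - s) = 2 * ((u' s * F s) * (s⁻¹ - 1)) := by
          field_simp
        rw [heq, div_pow] at h
        linarith
    have hAε : (∫ s in Ioc ε 1, u' s ^ 2) ≤ A :=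
      setIntegral_mono_set hf2 (ae_of_all _ fun s => sq_nonneg _)
        ((Ioc_subset_Ioc_left hε.le).eventuallyLE)
    have hsum : (∫ s in Ioc ε 1, ((1 / 4) * (F s ^ 2 / s ^ 2) + u' s ^ 2))
        = (1 / 4) * Bε + ∫ s in Ioc ε 1, u' s ^ 2 := by
      rw [MeasureTheory.integral_add (hgint.const_mul _) hf2ε,
        MeasureTheory.integral_const_mul]
    have hFε : F ε ^ 2 ≤ ε * A := by
      have hcs := cs_sq 0 ε hε.le u' (hf.mono_set (Ioc_subset_Ioc_right hε1))
        (hf2.mono_set (Ioc_subset_Ioc_right hε1))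
      have hFεval : F ε = ∫ s in Ioc 0 ε, u' s := intervalIntegral.integral_of_le hε.le
      have hmon : (∫ s in Ioc 0 ε, u' s ^ 2) ≤ A :=
        setIntegral_mono_set hf2 (ae_of_all _ fun s => sq_nonneg _)
          ((Ioc_subset_Ioc_right hε1).eventuallyLE)
      rw [hFεval]
      nlinarith [mul_le_mul_of_nonneg_left hmon hε.le]
    have h7 : F ε ^ 2 * (ε⁻¹ - 1) ≤ A := by
      have hinv : 0 < ε⁻¹ := inv_pos.2 hε
      have h1 : F ε ^ 2 * (ε⁻¹ - 1) ≤ F ε ^ 2 * ε⁻¹ :=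
        mul_le_mul_of_nonneg_left (by linarith) (sq_nonneg _)
      have h2 : F ε ^ 2 * ε⁻¹ ≤ A := by
        calc F ε ^ 2 * ε⁻¹ ≤ ε * A * ε⁻¹ := mul_le_mul_of_nonneg_right hFε hinv.le
          _ = A := by field_simp
      linarith
    rw [inv_sq_int ε hε hε1] at step2
    linarith [step2, hswap, hmono, hsum, hAε, h7]
  -- Part 1: integrability
  have hgIntOn : IntegrableOn (fun t => F t ^ 2 / t ^ 2) (Ioc 0 1) volume := by
    have ha : Filter.Tendsto (fun n : ℕ => 1 / ((n : ℝ) + 1)) Filter.atTop (nhds 0) :=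
      tendsto_one_div_add_atTop_nhds_zero_nat
    refine integrableOn_Ioc_of_intervalIntegral_norm_bounded_left
      (f := fun t => F t ^ 2 / t ^ 2) (a := fun n : ℕ => 1 / ((n : ℝ) + 1)) (I := 6 * A)
      (b := 1) (fun n => hgε _ (by positivity)) ha ?_
    refine Filter.Eventually.of_forall fun n => ?_
    have hpos : (0 : ℝ) < 1 / ((n : ℝ) + 1) := by positivity
    have hle1 : 1 / ((n : ℝ) + 1) ≤ 1 := by
      rw [div_le_one (by positivity)]
      linarith [Nat.cast_nonneg (α := ℝ) n]
    have hnorm : (∫ t in Ioc (1 / ((n : ℝ) + 1)) 1, ‖F t ^ 2 / t ^ 2‖)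
        = ∫ t in Ioc (1 / ((n : ℝ) + 1)) 1, F t ^ 2 / t ^ 2 :=
      setIntegral_congr_fun measurableSet_Ioc fun t _ => by
        rw [Real.norm_eq_abs, abs_of_nonneg (by positivity)]
    rw [hnorm]
    exact claim1 _ hpos hle1
  have hEq : EqOn (fun t => F t ^ 2 / t ^ 2) (fun t => u t ^ 2 / t ^ 2) (Ioc (0 : ℝ) 1) :=
    fun t ht => by simp only; rw [huF t (Ioc_subset_Icc_self ht)]
  have huIntOn : IntegrableOn (fun t => u t ^ 2 / t ^ 2) (Ioc 0 1) volume :=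
    hgIntOn.congr_fun hEq measurableSet_Ioc
  constructor
  · exact (intervalIntegrable_iff_integrableOn_Ioc_of_le h01).2 huIntOn
  -- Part 2: the pointwise bound
  intro x hx
  have hxIcc : x ∈ Icc (0 : ℝ) 1 := ⟨hx.1.le, hx.2⟩
  have hsq : Real.sqrt (1 + 4 * κ) ^ 2 = 1 + 4 * κ := Real.sq_sqrt (by linarith)
  have hsnn : 0 ≤ Real.sqrt (1 + 4 * κ) := Real.sqrt_nonneg _
  set C : ℝ := 1 / (2 * κ) * (1 + Real.sqrt (1 + 4 * κ)) with hCdef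
  have hC0 : 0 < C :=
    mul_pos (div_pos one_pos (by linarith)) (by linarith)
  have hCeq : κ * C ^ 2 = C + 1 := by
    rw [hCdef]
    field_simp
    nlinarith [hsq, Real.sq_sqrt (show (0:ℝ) ≤ 1 + κ * 4 by linarith)]
  set α : ℝ := κ * C with hαdef
  have hα0 : 0 < α := mul_pos hκ hC0
  set B : ℝ := ∫ t in Ioc (0 : ℝ) 1, u t ^ 2 / t ^ 2 with hBdef
  have hB0 : 0 ≤ B := setIntegral_nonneg measurableSet_Ioc fun t _ => by positivity
  set BF : ℝ := ∫ t in Ioc (0 : ℝ) 1, F t ^ 2 / t ^ 2 with hBFdef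
  have hBFB : BF = B := setIntegral_congr_fun measurableSet_Ioc hEq
  have hidx : F x ^ 2 = 2 * ∫ s in Ioc 0 x, u' s * F s := by
    have h := sq_identity 0 x hx.1 u' F (hf.mono_set (Ioc_subset_Ioc_right hx.2))
      (fun s hs => hFeq 0 ⟨le_rfl, h01⟩ s ⟨hs.1.le, hs.2.trans hx.2⟩ hs.1.le)
      (hfF.mono_set (Ioc_subset_Ioc_right hx.2))
    rw [hF0] at h
    linarith
  have hgx : IntegrableOn (fun t => F t ^ 2 / t ^ 2) (Ioc 0 x) volume :=
    hgIntOn.mono_set (Ioc_subset_Ioc_right hx.2)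
  have hf2x : IntegrableOn (fun s => u' s ^ 2) (Ioc 0 x) volume :=
    hf2.mono_set (Ioc_subset_Ioc_right hx.2)
  have hfFx : IntegrableOn (fun s => u' s * F s) (Ioc 0 x) volume :=
    hfF.mono_set (Ioc_subset_Ioc_right hx.2)
  have hptmono : (∫ s in Ioc 0 x, 2 * (u' s * F s))
      ≤ ∫ s in Ioc 0 x, x * (α⁻¹ * u' s ^ 2 + α * (F s ^ 2 / s ^ 2)) := by
    refine setIntegral_mono_on (hfFx.const_mul 2)
      (((hf2x.const_mul _).add (hgx.const_mul _)).const_mul x) measurableSet_Ioc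
      fun s hs => ?_
    have hs0 : 0 < s := hs.1
    have h := amgm2 (u' s) (F s / s) s x α hα0 hs0.le hs.2
    rw [div_mul_cancel₀ _ (ne_of_gt hs0), div_pow] at h
    exact h
  have hval : (∫ s in Ioc 0 x, 2 * (u' s * F s)) = F x ^ 2 := by
    rw [MeasureTheory.integral_const_mul, ← hidx]
  have hRHSval : (∫ s in Ioc 0 x, x * (α⁻¹ * u' s ^ 2 + α * (F s ^ 2 / s ^ 2)))
      = x * (α⁻¹ * (∫ s in Ioc 0 x, u' s ^ 2) + α * ∫ s in Ioc 0 x, F s ^ 2 / s ^ 2) := by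
    rw [MeasureTheory.integral_const_mul,
      MeasureTheory.integral_add (hf2x.const_mul _) (hgx.const_mul _),
      MeasureTheory.integral_const_mul, MeasureTheory.integral_const_mul]
  have hsub1 : (∫ s in Ioc 0 x, u' s ^ 2) ≤ A :=
    setIntegral_mono_set hf2 (ae_of_all _ fun s => sq_nonneg _)
      ((Ioc_subset_Ioc_right hx.2).eventuallyLE)
  have hsub2 : (∫ s in Ioc 0 x, F s ^ 2 / s ^ 2) ≤ BF :=
    setIntegral_mono_set hgIntOn (ae_of_all _ fun s => by positivity)
      ((Ioc_subset_Ioc_right hx.2).eventuallyLE)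
  have hcomb : F x ^ 2 ≤ x * (α⁻¹ * A + α * B) := by
    have h1 : α⁻¹ * (∫ s in Ioc 0 x, u' s ^ 2) + α * (∫ s in Ioc 0 x, F s ^ 2 / s ^ 2)
        ≤ α⁻¹ * A + α * B := by
      rw [← hBFB]
      exact add_le_add (mul_le_mul_of_nonneg_left hsub1 (inv_pos.2 hα0).le)
        (mul_le_mul_of_nonneg_left hsub2 hα0.le)
    calc F x ^ 2 = ∫ s in Ioc 0 x, 2 * (u' s * F s) := hval.symm
      _ ≤ x * (α⁻¹ * (∫ s in Ioc 0 x, u' s ^ 2) + α * ∫ s in Ioc 0 x, F s ^ 2 / s ^ 2) := by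
          rw [← hRHSval]; exact hptmono
      _ ≤ x * (α⁻¹ * A + α * B) := mul_le_mul_of_nonneg_left h1 hx.1.le
  have hfinal1 : F x ^ 2 / x ≤ α⁻¹ * A + α * B := by
    rw [div_le_iff₀ hx.1]
    linarith [hcomb]
  have hαC : α⁻¹ ≤ C := by
    have h9 : α * C = C + 1 := by
      rw [hαdef]
      linear_combination hCeq
    rw [inv_eq_one_div, div_le_iff₀ hα0, mul_comm C α]
    linarith [h9, hC0]
  rw [intervalIntegral.integral_of_le h01, intervalIntegral.integral_of_le h01]
  have huxF : u x = F x := huF x hxIcc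
  rw [huxF]
  have hαB : α * B = C * (κ * B) := by rw [hαdef]; ring
  have hαA : α⁻¹ * A ≤ C * A := mul_le_mul_of_nonneg_right hαC hA0
  calc F x ^ 2 / x ≤ α⁻¹ * A + α * B := hfinal1
    _ ≤ C * A + C * (κ * B) := by rw [← hαB]; linarith [hαA]
    _ = C * (A + κ * B) := by ring
end

section
/- Let μ be a positive Radon measure on ℝ² such that μ({x}) = 0 for all x. For θ ∈ [0,π), let l_θ denote any line in direction (cos θ, sin θ). Then the set Σ = { θ ∈ [0,π) : there exists a line l_θ with μ(l_θ) > 0 } is at most countable. -/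
open MeasureTheory Set Real

/-- The line through `p` in the direction `(cos θ, sin θ)`. -/
def lineDir (θ : ℝ) (p : ℝ × ℝ) : Set (ℝ × ℝ) :=
  {x | ∃ t : ℝ, x = p + t • ((Real.cos θ, Real.sin θ) : ℝ × ℝ)}

lemma lineDir_eq (θ : ℝ) (p : ℝ × ℝ) :
    lineDir θ p = {x : ℝ × ℝ | (x.1 - p.1) * Real.sin θ = (x.2 - p.2) * Real.cos θ} := by
  ext x
  simp only [lineDir, Set.mem_setOf_eq, Prod.ext_iff, Prod.smul_fst, Prod.smul_snd,
    smul_eq_mul]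
  constructor
  · rintro ⟨t, h1, h2⟩
    simp only [Prod.fst_add, Prod.snd_add, Prod.smul_fst, Prod.smul_snd, smul_eq_mul] at h1 h2
    rw [h1, h2]; ring
  · intro h
    rcases eq_or_ne (Real.cos θ) 0 with hc | hc
    · have hs : Real.sin θ ≠ 0 := by
        intro hs; have := Real.sin_sq_add_cos_sq θ; rw [hs, hc] at this; norm_num at this
      rw [hc, mul_zero, mul_eq_zero] at h
      have hx1 : x.1 = p.1 := by linarith [sub_eq_zero.mp (h.resolve_right hs)]
      refine ⟨(x.2 - p.2) / Real.sin θ, ?_, ?_⟩ <;>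
        simp only [Prod.fst_add, Prod.snd_add, Prod.smul_fst, Prod.smul_snd, smul_eq_mul]
      · rw [hc, mul_zero, add_zero]; exact hx1
      · field_simp; ring
    · refine ⟨(x.1 - p.1) / Real.cos θ, ?_, ?_⟩ <;>
        simp only [Prod.fst_add, Prod.snd_add, Prod.smul_fst, Prod.smul_snd, smul_eq_mul] <;>
        field_simp <;> nlinarith [h]

lemma lineDir_measurable (θ : ℝ) (p : ℝ × ℝ) : MeasurableSet (lineDir θ p) := by
  rw [lineDir_eq]
  exact measurableSet_eq_fun (by fun_prop) (by fun_prop)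

lemma lineDir_inter_subsingleton {θ₁ θ₂ : ℝ} (h1 : θ₁ ∈ Set.Ico 0 π) (h2 : θ₂ ∈ Set.Ico 0 π)
    (hne : θ₁ ≠ θ₂) (p q : ℝ × ℝ) :
    (lineDir θ₁ p ∩ lineDir θ₂ q).Subsingleton := by
  have hsin : Real.sin (θ₂ - θ₁) ≠ 0 := by
    intro hs
    rcases Real.sin_eq_zero_iff.mp hs with ⟨n, hn⟩
    have hlt : |θ₂ - θ₁| < π := by
      rw [abs_lt]; constructor <;> [linarith [h1.2, h2.1]; linarith [h1.1, h2.2]]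
    rw [← hn] at hlt
    have hp := Real.pi_pos
    rw [abs_mul, abs_of_pos hp] at hlt
    have habs : |(n : ℝ)| < 1 := by nlinarith [abs_nonneg ((n : ℝ))]
    have : n = 0 := by
      have h2 : ((|n| : ℤ) : ℝ) < 1 := by rw [Int.cast_abs]; exact habs
      have h3 : |n| < 1 := by exact_mod_cast h2
      rw [abs_lt] at h3
      omega
    rw [this] at hn; simp at hn
    exact hne (by linarith)
  rw [lineDir_eq, lineDir_eq]
  intro x hx y hy
  simp only [Set.mem_inter_iff, Set.mem_setOf_eq] at hx hy
  obtain ⟨hx1, hx2⟩ := hx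
  obtain ⟨hy1, hy2⟩ := hy
  have e1 : (x.1 - y.1) * Real.sin θ₁ = (x.2 - y.2) * Real.cos θ₁ := by linear_combination hx1 - hy1
  have e2 : (x.1 - y.1) * Real.sin θ₂ = (x.2 - y.2) * Real.cos θ₂ := by
    linear_combination hx2 - hy2
  rw [Real.sin_sub] at hsin
  have h1' : (x.1 - y.1) * (Real.sin θ₂ * Real.cos θ₁ - Real.cos θ₂ * Real.sin θ₁) = 0 := by
    linear_combination Real.cos θ₁ * e2 - Real.cos θ₂ * e1
  have h2' : (x.2 - y.2) * (Real.sin θ₂ * Real.cos θ₁ - Real.cos θ₂ * Real.sin θ₁) = 0 := by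
    linear_combination Real.sin θ₁ * e2 - Real.sin θ₂ * e1
  have hx1y : x.1 = y.1 := by
    have := mul_eq_zero.mp h1'; rcases this with h | h
    · linarith
    · exact absurd h hsin
  have hx2y : x.2 = y.2 := by
    have := mul_eq_zero.mp h2'; rcases this with h | h
    · linarith
    · exact absurd h hsin
  exact Prod.ext hx1y hx2y

/-- For a Radon measure `μ` on `ℝ²` (σ-finite, finite on compacts) without
atoms, the set of directions `θ ∈ [0, π)` for which some line in direction `θ`
has positive measure is at most countable. -/
theorem countable_directions (μ : Measure (ℝ × ℝ)) [SigmaFinite μ]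
    [IsFiniteMeasureOnCompacts μ] (hna : ∀ x : ℝ × ℝ, μ {x} = 0) :
    Set.Countable {θ ∈ Set.Ico 0 π | ∃ p : ℝ × ℝ, 0 < μ (lineDir θ p)} := by
  set S := {θ ∈ Set.Ico 0 π | ∃ p : ℝ × ℝ, 0 < μ (lineDir θ p)} with hS
  have hchoice : ∀ θ : S, ∃ p : ℝ × ℝ, 0 < μ (lineDir (θ : ℝ) p) := fun θ => θ.2.2
  choose f hf using hchoice
  have key : Set.Countable {i : S | 0 < μ (lineDir (i : ℝ) (f i))} := by
    apply Measure.countable_meas_pos_of_disjoint_iUnion₀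
      (As := fun i : S => lineDir (i : ℝ) (f i))
    · exact fun i => (lineDir_measurable _ _).nullMeasurableSet
    · intro i j hij
      have hsub := lineDir_inter_subsingleton i.2.1 j.2.1
        (fun h => hij (Subtype.ext h)) (f i) (f j)
      rcases hsub.eq_empty_or_singleton with h | ⟨x, h⟩
      · simp [Function.onFun, MeasureTheory.AEDisjoint, h]
      · simp [Function.onFun, MeasureTheory.AEDisjoint, h, hna x]
  have : {i : S | 0 < μ (lineDir (i : ℝ) (f i))} = Set.univ := by
    ext i; simp [hf i]
  rw [this] at key
  have : Countable S := Set.countable_univ_iff.mp key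
  exact Set.countable_coe_iff.mp this
end

section
/- Let 𝓑(s) = (1+s)ln(1+s) − s. Then as t → 0+, t·𝓑^{-1}(1/t) = (1/ln(1/t))·(1 + o(1)); equivalently, 𝓑^{-1}(r) ~ r/ln r as r → ∞. -/
open Filter Topology

/-- The N-function `𝓑(s) = (1+s)·ln(1+s) − s`. -/
noncomputable def BFun (s : ℝ) : ℝ := (1 + s) * Real.log (1 + s) - s

lemma BFun_le_sq {s : ℝ} (hs : 0 ≤ s) : BFun s ≤ (1 + s) * s := by
  have h1 : (0:ℝ) < 1 + s := by linarith
  have h2 : Real.log (1 + s) ≤ (1 + s) - 1 := Real.log_le_sub_one_of_pos h1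
  have := mul_le_mul_of_nonneg_left h2 h1.le
  simp only [BFun]
  nlinarith

/-- `BFun s / (s log s) → 1`. -/
lemma BFun_ratio_tendsto :
    Tendsto (fun s => BFun s / (s * Real.log s)) atTop (nhds 1) := by
  have hA : Tendsto (fun s : ℝ => (1 + s) / s) atTop (nhds 1) := by
    have : Tendsto (fun s : ℝ => 1 / s + 1) atTop (nhds (0 + 1)) :=
      (tendsto_inv_atTop_zero.congr fun s => (one_div s).symm).add
          tendsto_const_nhds
    have h := this
    rw [zero_add] at h
    refine h.congr' ?_
    filter_upwards [eventually_gt_atTop (0:ℝ)] with s hs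
    field_simp
  have hlog1s : Tendsto (fun s : ℝ => Real.log ((1 + s) / s)) atTop (nhds 0) := by
    have := (Real.continuousAt_log one_ne_zero).tendsto.comp hA
    simpa [Function.comp_def] using this
  have hB : Tendsto (fun s : ℝ => Real.log (1 + s) / Real.log s) atTop (nhds 1) := by
    have h0 : Tendsto (fun s : ℝ => Real.log ((1 + s) / s) / Real.log s + 1)
        atTop (nhds (0 + 1)) :=
      (hlog1s.div_atTop Real.tendsto_log_atTop).add tendsto_const_nhds
    rw [zero_add] at h0
    refine h0.congr' ?_
    filter_upwards [eventually_gt_atTop (1:ℝ)] with s hs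
    have hs0 : (0:ℝ) < s := by linarith
    have h1s : (0:ℝ) < 1 + s := by linarith
    have hls : Real.log s ≠ 0 := ne_of_gt (Real.log_pos hs)
    rw [Real.log_div (by positivity) (ne_of_gt hs0)]
    field_simp
    ring
  have hC : Tendsto (fun s : ℝ => 1 / Real.log s) atTop (nhds 0) :=
    tendsto_const_nhds.div_atTop Real.tendsto_log_atTop
  have h : Tendsto (fun s : ℝ => ((1 + s) / s) * (Real.log (1 + s) / Real.log s)
      - 1 / Real.log s) atTop (nhds (1 * 1 - 0)) := (hA.mul hB).sub hC
  rw [show (1:ℝ) * 1 - 0 = 1 by ring] at h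
  refine h.congr' ?_
  filter_upwards [eventually_gt_atTop (1:ℝ)] with s hs
  have hs0 : s ≠ 0 := by positivity
  have hls : Real.log s ≠ 0 := ne_of_gt (Real.log_pos hs)
  simp only [BFun]
  field_simp

lemma BFun_main :
    Tendsto (fun s => s * Real.log (BFun s) / BFun s) atTop (nhds 1) := by
  have hR := BFun_ratio_tendsto
  -- eventually the ratio is > 1/2
  have hRpos : ∀ᶠ s in atTop, (1:ℝ)/2 < BFun s / (s * Real.log s) :=
    hR.eventually (eventually_gt_nhds (by norm_num))
  -- log (BFun s) / log s → 1
  have hlogq : Tendsto (fun s => Real.log (BFun s / (s * Real.log s))) atTop (nhds 0) := by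
    have := (Real.continuousAt_log one_ne_zero).tendsto.comp hR
    simpa [Function.comp_def] using this
  have hloglog : Tendsto (fun s : ℝ => Real.log (Real.log s) / Real.log s) atTop (nhds 0) :=
    (Real.isLittleO_log_id_atTop.tendsto_div_nhds_zero).comp Real.tendsto_log_atTop
  have hL : Tendsto (fun s : ℝ => Real.log (BFun s) / Real.log s) atTop (nhds 1) := by
    have h0 : Tendsto (fun s : ℝ =>
        Real.log (BFun s / (s * Real.log s)) / Real.log s + 1
          + Real.log (Real.log s) / Real.log s) atTop (nhds (0 + 1 + 0)) :=
      ((hlogq.div_atTop Real.tendsto_log_atTop).add tendsto_const_nhds).add hloglog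
    rw [show (0:ℝ) + 1 + 0 = 1 by ring] at h0
    refine h0.congr' ?_
    filter_upwards [eventually_gt_atTop (1:ℝ), hRpos] with s hs hq
    have hs0 : s ≠ 0 := by positivity
    have hlsp : 0 < Real.log s := Real.log_pos hs
    have hls : Real.log s ≠ 0 := ne_of_gt hlsp
    have hslp : 0 < s * Real.log s := by positivity
    have hBpos : 0 < BFun s := by
      have := (div_pos_iff.mp (lt_trans (by norm_num) hq)).resolve_right
        (fun ⟨_, h2⟩ => absurd hslp (not_lt.mpr h2.le))
      exact this.1
    have key : Real.log (BFun s) =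
        Real.log (BFun s / (s * Real.log s)) + Real.log s + Real.log (Real.log s) := by
      rw [Real.log_div (ne_of_gt hBpos) (ne_of_gt hslp),
        Real.log_mul hs0 hls]
      ring
    rw [key]
    field_simp
  -- combine: s * log(BFun s) / BFun s = (log BFun s / log s) / (BFun s / (s log s))
  have h := hL.div hR one_ne_zero
  rw [div_one] at h
  refine h.congr' ?_
  filter_upwards [eventually_gt_atTop (1:ℝ), hRpos] with s hs hq
  have hs0 : s ≠ 0 := by positivity
  have hlsp : 0 < Real.log s := Real.log_pos hs
  have hls : Real.log s ≠ 0 := ne_of_gt hlsp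
  have hslp : 0 < s * Real.log s := by positivity
  have hBpos : 0 < BFun s := by
    have := (div_pos_iff.mp (lt_trans (by norm_num) hq)).resolve_right
      (fun ⟨_, h2⟩ => absurd hslp (not_lt.mpr h2.le))
    exact this.1
  simp only [Pi.div_apply]
  field_simp

/-- Asymptotics of the inverse of `𝓑` at `∞`: if `g` is the (nonnegative)
inverse function of `𝓑`, then `𝓑^{-1}(r) ~ r/ln r` as `r → ∞`; equivalently
`t·𝓑^{-1}(1/t) = (1/ln(1/t))(1 + o(1))` as `t → 0+`. -/
theorem BFun_inv_asymp_top (g : ℝ → ℝ)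
    (hg : ∀ r ≥ (0 : ℝ), 0 ≤ g r ∧ BFun (g r) = r) :
    Tendsto (fun r => g r / (r / Real.log r)) atTop (nhds 1) := by
  have hgtop : Tendsto g atTop atTop := by
    rw [tendsto_atTop]
    intro M
    set M' := max M 0 with hM'
    filter_upwards [eventually_ge_atTop ((1 + M') * M' + 1)] with r hr
    have hM0 : 0 ≤ M' := le_max_right _ _
    have hr0 : (0:ℝ) ≤ r := le_trans (by positivity) hr
    obtain ⟨hg0, hgB⟩ := hg r hr0
    by_contra hlt
    push_neg at hlt
    have hltM' : g r < M' := lt_of_lt_of_le hlt (le_max_left _ _)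
    have h1 : BFun (g r) ≤ (1 + g r) * g r := BFun_le_sq hg0
    have h2 : (1 + g r) * g r ≤ (1 + M') * M' := by nlinarith
    rw [hgB] at h1
    linarith
  have h := BFun_main.comp hgtop
  refine h.congr' ?_
  filter_upwards [hgtop.eventually (eventually_ge_atTop 0), eventually_ge_atTop (0:ℝ)]
    with r hgr hr
  obtain ⟨hg0, hgB⟩ := hg r hr
  simp only [Function.comp_apply, hgB]
  rw [div_div_eq_mul_div]
end
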